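/- Let F be a field, let A = [[α₁,α₂,α₃,α₄],[β₁,β₂,β₃,β₄]] be a 2×4 matrix over F, and let D be a 2×2 matrix over F satisfying D·A = A·(D⊗I₂ + I₂⊗D), where ⊗ is the Kronecker product and I₂ the 2×2 identity matrix. Then P(A)·D = 0, that is, (α₁+β₃, α₂+β₄)·D = 0 and (α₁+β₂, α₃+β₄)·D = 0. -/
import Mathlib


open Matrix Kronecker

/-- The matrix of structure constants (MSC) of a 2-dimensional algebra, as a
`2 × (2 × 2)` matrix: the column indexed by `(j,k)` corresponds to the product
`e_j · e_k`, so the columns in order `(0,0), (0,1), (1,0), (1,1)` carry the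
entries `α₁ α₂ α₃ α₄` (first row) and `β₁ β₂ β₃ β₄` (second row). -/
def MSC {F : Type*} [Field F] (a1 a2 a3 a4 b1 b2 b3 b4 : F) :
    Matrix (Fin 2) (Fin 2 × Fin 2) F :=
  Matrix.of fun i j => !![a1, a2, a3, a4; b1, b2, b3, b4] i (finProdFinEquiv j)

/-- `g` is an automorphism matrix of the algebra with MSC `A`:
`g` is invertible and `g • A = A • (g ⊗ g)`. -/
def IsAutoMat {F : Type*} [Field F] (A : Matrix (Fin 2) (Fin 2 × Fin 2) F)
    (g : Matrix (Fin 2) (Fin 2) F) : Prop :=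
  IsUnit g ∧ g * A = A * (g ⊗ₖ g)

/-- `D` is a derivation matrix of the algebra with MSC `A`:
`D • A = A • (D ⊗ I + I ⊗ D)`. -/
def IsDerMat {F : Type*} [Field F] (A : Matrix (Fin 2) (Fin 2 × Fin 2) F)
    (D : Matrix (Fin 2) (Fin 2) F) : Prop :=
  D * A = A * (D ⊗ₖ (1 : Matrix (Fin 2) (Fin 2) F) + (1 : Matrix (Fin 2) (Fin 2) F) ⊗ₖ D)

/-- `P(A)` is the 2×2 matrix whose rows are
`tr̄₁(A) = (α₁+β₃, α₂+β₄)` and `tr̄₂(A) = (α₁+β₂, α₃+β₄)`. -/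
def Pmat {F : Type*} [Field F] (A : Matrix (Fin 2) (Fin 2 × Fin 2) F) :
    Matrix (Fin 2) (Fin 2) F :=
  !![A 0 (0, 0) + A 1 (1, 0), A 0 (0, 1) + A 1 (1, 1);
     A 0 (0, 0) + A 1 (0, 1), A 0 (1, 0) + A 1 (1, 1)]

theorem stmt_1 {F : Type*} [Field F] (a1 a2 a3 a4 b1 b2 b3 b4 : F)
    (A : Matrix (Fin 2) (Fin 2 × Fin 2) F)
    (hA : A = MSC a1 a2 a3 a4 b1 b2 b3 b4)
    (D : Matrix (Fin 2) (Fin 2) F)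
    (hD : IsDerMat A D) :
    Pmat A * D = 0 := by
  subst hA
  have h := fun i j => congrFun (congrFun hD i) j
  have h00 := h 0 (0,0); have h01 := h 0 (0,1); have h02 := h 0 (1,0); have h03 := h 0 (1,1)
  have h10 := h 1 (0,0); have h11 := h 1 (0,1); have h12 := h 1 (1,0); have h13 := h 1 (1,1)
  simp [MSC, Matrix.mul_apply, Matrix.kroneckerMap_apply, Fin.sum_univ_two,
    Fintype.sum_prod_type, Matrix.one_apply, finProdFinEquiv]
    at h00 h01 h02 h03 h10 h11 h12 h13
  ext i j
  fin_cases i <;> fin_cases j <;>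
    simp [MSC, Pmat, Matrix.mul_apply, Fin.sum_univ_two, finProdFinEquiv]
  · linear_combination -h00 - h12
  · linear_combination -h01 - h13
  · linear_combination -h00 - h11
  · linear_combination -h02 - h13
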